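/- In the group A = ⟨a, b | b³ = 1, a⁻¹ba = b⁻¹⟩, the cyclic subgroup ⟨a³⟩ has index 9 in A. -/

import Mathlib

/-- Generators of the group `A = ⟨a, b | b³ = 1, a⁻¹ba = b⁻¹⟩`. -/
inductive Gen : Type
  | a
  | b

/-- Relators: `b³` and `a⁻¹bab` (the latter encodes `a⁻¹ba = b⁻¹`). -/
def rels : Set (FreeGroup Gen) :=
  {FreeGroup.of Gen.b ^ 3,
   (FreeGroup.of Gen.a)⁻¹ * FreeGroup.of Gen.b * FreeGroup.of Gen.a * FreeGroup.of Gen.b}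

/-- The group `A = ⟨a, b | b³ = 1, a⁻¹ba = b⁻¹⟩`. -/
abbrev A := PresentedGroup rels

def a : A := PresentedGroup.of Gen.a
def b : A := PresentedGroup.of Gen.b

lemma rel_mem_one : (FreeGroup.of Gen.b ^ 3 : FreeGroup Gen) ∈ rels := Or.inl rfl
lemma rel_mem_two :
    ((FreeGroup.of Gen.a)⁻¹ * FreeGroup.of Gen.b * FreeGroup.of Gen.a * FreeGroup.of Gen.b
      : FreeGroup Gen) ∈ rels := Or.inr rfl

lemma mk_rel_one (r : FreeGroup Gen) (hr : r ∈ rels) : PresentedGroup.mk rels r = 1 := by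
  rw [PresentedGroup.mk_eq_one_iff]
  exact Subgroup.subset_normalClosure hr

lemma hb3 : b ^ 3 = 1 := by
  have := mk_rel_one _ rel_mem_one
  simpa [b, PresentedGroup.of, map_pow] using this

lemma hrel : a⁻¹ * b * a * b = 1 := by
  have := mk_rel_one _ rel_mem_two
  simpa [a, b, PresentedGroup.of, map_mul, map_inv] using this

lemma hconj : a⁻¹ * b * a = b⁻¹ := by
  have h := hrel
  rwa [mul_eq_one_iff_eq_inv] at h

lemma hba : b * a = a * b⁻¹ := by
  rw [← hconj]; group

lemma hab : a * b = b⁻¹ * a := by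
  calc a * b = b⁻¹ * (b * a) * b := by group
  _ = b⁻¹ * (a * b⁻¹) * b := by rw [hba]
  _ = b⁻¹ * a := by group

lemma conj_a_b : MulAut.conj a b = b⁻¹ := by
  simp only [MulAut.conj_apply]
  rw [hab]; group

lemma conj_a_inv_b : MulAut.conj a⁻¹ b = b⁻¹ := by
  simp only [MulAut.conj_apply, inv_inv]
  exact hconj

/-- conjugation by `a^n` sends `b` to `b` or `b⁻¹`. -/
lemma aconj_pow (n : ℤ) : MulAut.conj (a ^ n) b = b ∨ MulAut.conj (a ^ n) b = b⁻¹ := by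
  induction n using Int.induction_on with
  | zero => simp
  | succ k ih =>
    have : (a : A) ^ ((k : ℤ) + 1) = a ^ (k : ℤ) * a := by rw [zpow_add_one]
    rw [this, map_mul, MulAut.mul_apply, conj_a_b]
    rcases ih with h | h
    · right; rw [map_inv, h]
    · left; rw [map_inv, h, inv_inv]
  | pred k ih =>
    have : (a : A) ^ (-(k : ℤ) - 1) = a ^ (-(k : ℤ)) * a⁻¹ := by
      rw [← zpow_neg_one, ← zpow_add]; ring_nf
    rw [this, map_mul, MulAut.mul_apply, conj_a_inv_b]
    rcases ih with h | h
    · right; rw [map_inv, h]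
    · left; rw [map_inv, h, inv_inv]

/-- `a^n * b^j = b^(±j) * a^n`. -/
lemma key (n : ℤ) :
    (∀ j : ℤ, a ^ n * b ^ j = b ^ j * a ^ n) ∨
    (∀ j : ℤ, a ^ n * b ^ j = b ^ (-j) * a ^ n) := by
  rcases aconj_pow n with h | h
  · left
    intro j
    have h2 := map_zpow (MulAut.conj (a ^ n)) b j
    rw [h] at h2
    simp only [MulAut.conj_apply] at h2
    calc a ^ n * b ^ j = (a ^ n * b ^ j * (a ^ n)⁻¹) * a ^ n := by group
    _ = b ^ j * a ^ n := by rw [h2]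
  · right
    intro j
    have h2 := map_zpow (MulAut.conj (a ^ n)) b j
    rw [h] at h2
    simp only [MulAut.conj_apply] at h2
    calc a ^ n * b ^ j = (a ^ n * b ^ j * (a ^ n)⁻¹) * a ^ n := by group
    _ = (b⁻¹) ^ j * a ^ n := by rw [h2]
    _ = b ^ (-j) * a ^ n := by rw [inv_zpow, ← zpow_neg]

/-- Normal form: every element of `A` is `b^i * a^n`. -/
lemma normal_form (g : A) : ∃ i n : ℤ, g = b ^ i * a ^ n := by
  induction g using PresentedGroup.induction_on with
  | H z =>
  induction z using FreeGroup.induction_on with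
  | C1 => exact ⟨0, 0, by simp⟩
  | of x =>
    cases x with
    | a => exact ⟨0, 1, by rw [zpow_zero, one_mul, zpow_one]; rfl⟩
    | b => exact ⟨1, 0, by rw [zpow_zero, mul_one, zpow_one]; rfl⟩
  | inv_of x hx =>
    obtain ⟨i, n, h⟩ := hx
    rw [map_inv, h, mul_inv_rev, ← zpow_neg, ← zpow_neg]
    rcases key (-n) with hk | hk
    · exact ⟨-i, -n, hk (-i)⟩
    · exact ⟨i, -n, by rw [hk (-i), neg_neg]⟩
  | mul x y hx hy =>
    obtain ⟨i, n, h1⟩ := hx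
    obtain ⟨j, m, h2⟩ := hy
    rw [map_mul, h1, h2]
    rcases key n with hk | hk
    · refine ⟨i + j, n + m, ?_⟩
      rw [zpow_add, zpow_add]
      calc b ^ i * a ^ n * (b ^ j * a ^ m) = b ^ i * (a ^ n * b ^ j) * a ^ m := by group
      _ = b ^ i * (b ^ j * a ^ n) * a ^ m := by rw [hk j]
      _ = b ^ i * b ^ j * (a ^ n * a ^ m) := by group
    · refine ⟨i + -j, n + m, ?_⟩
      rw [zpow_add, zpow_add]
      calc b ^ i * a ^ n * (b ^ j * a ^ m) = b ^ i * (a ^ n * b ^ j) * a ^ m := by group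
      _ = b ^ i * (b ^ (-j) * a ^ n) * a ^ m := by rw [hk j]
      _ = b ^ i * b ^ (-j) * (a ^ n * a ^ m) := by group

/-- The permutation corresponding to `a` acting on cosets. -/
def σa : Equiv.Perm (ZMod 3 × ZMod 3) where
  toFun p := (-p.1, p.2 + 1)
  invFun p := (-p.1, p.2 - 1)
  left_inv p := by simp
  right_inv p := by simp

/-- The permutation corresponding to `b`. -/
def σb : Equiv.Perm (ZMod 3 × ZMod 3) where
  toFun p := (p.1 + 1, p.2)
  invFun p := (p.1 - 1, p.2)
  left_inv p := by simp
  right_inv p := by simp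

def fGen : Gen → Equiv.Perm (ZMod 3 × ZMod 3)
  | Gen.a => σa
  | Gen.b => σb

lemma fGen_rels : ∀ r ∈ rels, FreeGroup.lift fGen r = 1 := by
  intro r hr
  rcases hr with h | h
  · subst h
    rw [map_pow, FreeGroup.lift_apply_of]
    ext p
    · show (σb (σb (σb p))).1 = p.1
      show p.1 + 1 + 1 + 1 = p.1
      have : (1 + 1 + 1 : ZMod 3) = 0 := by decide
      rw [add_assoc, add_assoc, ← add_assoc (1 : ZMod 3), this, add_zero]
    · rfl
  · rw [Set.mem_singleton_iff] at h
    subst h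
    simp only [map_mul, map_inv, FreeGroup.lift_apply_of]
    ext p
    · show (σa⁻¹ (σb (σa (σb p)))).1 = p.1
      show -(-(p.1 + 1) + 1) = p.1
      ring
    · show (σa⁻¹ (σb (σa (σb p)))).2 = p.2
      show p.2 + 1 - 1 = p.2
      ring

noncomputable def φ : A →* Equiv.Perm (ZMod 3 × ZMod 3) := PresentedGroup.toGroup fGen_rels

lemma φa : φ a = σa := PresentedGroup.toGroup.of fGen_rels
lemma φb : φ b = σb := PresentedGroup.toGroup.of fGen_rels

lemma σa_zpow (n : ℤ) : ∀ y : ZMod 3, (σa ^ n) (0, y) = (0, y + n) := by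
  induction n using Int.induction_on with
  | zero => intro y; simp
  | succ k ih =>
    intro y
    rw [zpow_add_one, Equiv.Perm.mul_apply]
    show (σa ^ (k : ℤ)) (-0, y + 1) = _
    rw [neg_zero, ih (y + 1)]
    simp only [Prod.mk.injEq]
    refine ⟨trivial, ?_⟩
    push_cast
    ring
  | pred k ih =>
    intro y
    have h : σa ^ (-(k : ℤ) - 1) = σa ^ (-(k : ℤ)) * σa⁻¹ := by
      rw [← zpow_neg_one, ← zpow_add]; ring_nf
    rw [h, Equiv.Perm.mul_apply]
    show (σa ^ (-(k : ℤ))) (-0, y - 1) = _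
    rw [neg_zero, ih (y - 1)]
    simp only [Prod.mk.injEq]
    refine ⟨trivial, ?_⟩
    push_cast
    ring

lemma σb_zpow (i : ℤ) : ∀ p : ZMod 3 × ZMod 3, (σb ^ i) p = (p.1 + i, p.2) := by
  induction i using Int.induction_on with
  | zero => intro p; simp
  | succ k ih =>
    intro p
    rw [zpow_add_one, Equiv.Perm.mul_apply]
    show (σb ^ (k : ℤ)) (p.1 + 1, p.2) = _
    rw [ih (p.1 + 1, p.2)]
    simp only [Prod.mk.injEq]
    refine ⟨?_, trivial⟩
    push_cast
    ring
  | pred k ih =>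
    intro p
    have h : σb ^ (-(k : ℤ) - 1) = σb ^ (-(k : ℤ)) * σb⁻¹ := by
      rw [← zpow_neg_one, ← zpow_add]; ring_nf
    rw [h, Equiv.Perm.mul_apply]
    show (σb ^ (-(k : ℤ))) (p.1 - 1, p.2) = _
    rw [ih (p.1 - 1, p.2)]
    simp only [Prod.mk.injEq]
    refine ⟨?_, trivial⟩
    push_cast
    ring

lemma φ_val (i n : ℤ) : φ (b ^ i * a ^ n) (0, 0) = ((i : ZMod 3), (n : ZMod 3)) := by
  rw [map_mul, map_zpow, map_zpow, φa, φb, Equiv.Perm.mul_apply, σa_zpow, σb_zpow]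
  simp

lemma a_zpow_three : (a : A) ^ (3 : ℤ) = a ^ 3 := by
  rw [show (3 : ℤ) = ((3 : ℕ) : ℤ) by norm_num, zpow_natCast]

lemma b_zpow_three : (b : A) ^ (3 : ℤ) = 1 := by
  rw [show (3 : ℤ) = ((3 : ℕ) : ℤ) by norm_num, zpow_natCast, hb3]

lemma stab (g : A) (hg : φ g (0, 0) = (0, 0)) : g ∈ Subgroup.zpowers (a ^ 3) := by
  obtain ⟨i, n, rfl⟩ := normal_form g
  rw [φ_val] at hg
  have hi : ((i : ZMod 3)) = 0 := congrArg Prod.fst hg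
  have hn : ((n : ZMod 3)) = 0 := congrArg Prod.snd hg
  rw [ZMod.intCast_zmod_eq_zero_iff_dvd] at hi hn
  push_cast at hi hn
  obtain ⟨k, rfl⟩ := hi
  obtain ⟨m, rfl⟩ := hn
  have hb : (b : A) ^ ((3 : ℤ) * k) = 1 := by
    rw [zpow_mul, b_zpow_three, one_zpow]
  rw [hb, one_mul]
  exact ⟨m, by show (a ^ 3) ^ m = a ^ ((3 : ℤ) * m); rw [← a_zpow_three, ← zpow_mul]⟩

lemma fix_of_mem (h : A) (hh : h ∈ Subgroup.zpowers (a ^ 3)) : φ h (0, 0) = (0, 0) := by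
  obtain ⟨k, rfl⟩ := hh
  show (φ ((a ^ 3) ^ k)) (0, 0) = (0, 0)
  have h1 : ((a : A) ^ 3) ^ k = b ^ (0 : ℤ) * a ^ ((3 : ℤ) * k) := by
    rw [zpow_zero, one_mul, ← a_zpow_three, ← zpow_mul]
  rw [h1, φ_val]
  have h0 : (((3 : ℤ) * k : ℤ) : ZMod 3) = 0 := by
    push_cast
    rw [show (3 : ZMod 3) = 0 by decide, zero_mul]
  rw [h0]
  simp

/-- In `A = ⟨a, b | b³ = 1, a⁻¹ba = b⁻¹⟩`, the cyclic subgroup `⟨a³⟩` has index `9`. -/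
theorem index_zpowers_a_cubed : (Subgroup.zpowers (a ^ 3)).index = 9 := by
  set H := Subgroup.zpowers (a ^ 3) with hH
  have resp : ∀ (x y : A), QuotientGroup.leftRel H x y →
      φ x (0, 0) = φ y (0, 0) := by
    intro x y hxy
    rw [QuotientGroup.leftRel_apply] at hxy
    have hxy2 : y = x * (x⁻¹ * y) := by group
    rw [hxy2, map_mul, Equiv.Perm.mul_apply, fix_of_mem _ hxy]
  let F : (A ⧸ H) → ZMod 3 × ZMod 3 :=
    fun q => Quotient.liftOn' q (fun g => φ g (0, 0)) resp
  have hbij : Function.Bijective F := by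
    constructor
    · intro q q'
      induction q using QuotientGroup.induction_on with
      | H x =>
      induction q' using QuotientGroup.induction_on with
      | H y =>
      intro hxy
      have hx : φ x (0, 0) = φ y (0, 0) := hxy
      rw [QuotientGroup.eq]
      apply stab
      rw [map_mul, map_inv, Equiv.Perm.mul_apply, ← hx]
      simp
    · rintro ⟨x, y⟩
      refine ⟨QuotientGroup.mk (b ^ (x.val : ℤ) * a ^ (y.val : ℤ)), ?_⟩
      show φ (b ^ (x.val : ℤ) * a ^ (y.val : ℤ)) (0, 0) = (x, y)
      rw [φ_val]
      push_cast
      simp [ZMod.natCast_val, ZMod.cast_id]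
  have hcard : Nat.card (A ⧸ H) = Nat.card (ZMod 3 × ZMod 3) :=
    Nat.card_congr (Equiv.ofBijective F hbij)
  rw [Subgroup.index, hcard]
  simp [Nat.card_eq_fintype_card]
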